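/- The function t ↦ −log(log(1 + e^t)) is convex on the real line. Consequently, for each fixed x ∈ ℝ^M, the function w ↦ −log(log(1 + e^{⟨w, x⟩})) is convex on ℝ^M. -/

import Mathlib

open Real

private lemma splus_pos (t : ℝ) : (0:ℝ) < 1 + Real.exp t := by positivity

private lemma logsplus_pos (t : ℝ) : 0 < Real.log (1 + Real.exp t) :=
  Real.log_pos (by linarith [Real.exp_pos t])

private lemma hasDerivAt_f (t : ℝ) :
    HasDerivAt (fun t : ℝ => -Real.log (Real.log (1 + Real.exp t)))
      (-(Real.exp t / ((1 + Real.exp t) * Real.log (1 + Real.exp t)))) t := by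
  have h1 : HasDerivAt (fun t : ℝ => 1 + Real.exp t) (Real.exp t) t :=
    (Real.hasDerivAt_exp t).const_add 1
  have h2 : HasDerivAt (fun t : ℝ => Real.log (1 + Real.exp t))
      (Real.exp t / (1 + Real.exp t)) t := h1.log (splus_pos t).ne'
  have h3 := (h2.log (logsplus_pos t).ne').neg
  rw [div_div] at h3
  exact h3

private lemma hasDerivAt_g (t : ℝ) :
    HasDerivAt (fun t : ℝ => -(Real.exp t / ((1 + Real.exp t) * Real.log (1 + Real.exp t))))
      (-((Real.exp t * ((1 + Real.exp t) * Real.log (1 + Real.exp t)) -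
          Real.exp t * (Real.exp t * Real.log (1 + Real.exp t) +
            (1 + Real.exp t) * (Real.exp t / (1 + Real.exp t)))) /
          ((1 + Real.exp t) * Real.log (1 + Real.exp t)) ^ 2)) t := by
  have h1 : HasDerivAt (fun t : ℝ => 1 + Real.exp t) (Real.exp t) t :=
    (Real.hasDerivAt_exp t).const_add 1
  have h2 : HasDerivAt (fun t : ℝ => Real.log (1 + Real.exp t))
      (Real.exp t / (1 + Real.exp t)) t := h1.log (splus_pos t).ne'
  have hv : HasDerivAt (fun t : ℝ => (1 + Real.exp t) * Real.log (1 + Real.exp t))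
      (Real.exp t * Real.log (1 + Real.exp t) +
        (1 + Real.exp t) * (Real.exp t / (1 + Real.exp t))) t := h1.mul h2
  have hvne : (1 + Real.exp t) * Real.log (1 + Real.exp t) ≠ 0 :=
    (mul_pos (splus_pos t) (logsplus_pos t)).ne'
  exact ((Real.hasDerivAt_exp t).div hv hvne).neg

private lemma deriv_f_eq :
    deriv (fun t : ℝ => -Real.log (Real.log (1 + Real.exp t))) =
      fun t : ℝ => -(Real.exp t / ((1 + Real.exp t) * Real.log (1 + Real.exp t))) := by
  funext t; exact (hasDerivAt_f t).deriv

private lemma part1 :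
    ConvexOn ℝ Set.univ (fun t : ℝ => -Real.log (Real.log (1 + Real.exp t))) := by
  apply convexOn_of_deriv2_nonneg convex_univ
  · exact fun t _ => ((hasDerivAt_f t).continuousAt).continuousWithinAt
  · exact fun t _ => (hasDerivAt_f t).differentiableAt.differentiableWithinAt
  · rw [deriv_f_eq]
    exact fun t _ => (hasDerivAt_g t).differentiableAt.differentiableWithinAt
  · intro t _
    have hL : Real.log (1 + Real.exp t) ≤ Real.exp t := by
      have := Real.log_le_sub_one_of_pos (splus_pos t)
      linarith
    simp only [Function.iterate_succ, Function.iterate_zero, Function.comp_apply, id]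
    rw [deriv_f_eq, (hasDerivAt_g t).deriv]
    set e := Real.exp t with he
    set L := Real.log (1 + Real.exp t) with hL'
    have hnum : e * ((1 + e) * L) - e * (e * L + (1 + e) * (e / (1 + e))) = e * (L - e) := by
      rw [mul_div_cancel₀ _ (splus_pos t).ne']
      ring
    rw [hnum]
    have h1 : e * (L - e) ≤ 0 :=
      mul_nonpos_of_nonneg_of_nonpos (Real.exp_pos t).le (by linarith)
    have h2 : (0:ℝ) < ((1 + e) * L) ^ 2 :=
      pow_pos (mul_pos (splus_pos t) (logsplus_pos t)) 2
    have := div_nonpos_of_nonpos_of_nonneg h1 h2.le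
    linarith

/-- The function `t ↦ −log (log (1 + e^t))` is convex on the real line; consequently, for each
fixed `x ∈ ℝ^M`, the function `w ↦ −log (log (1 + e^{⟨w, x⟩}))` is convex on `ℝ^M`. -/
theorem neg_log_softplus_convexOn :
    ConvexOn ℝ Set.univ (fun t : ℝ => -Real.log (Real.log (1 + Real.exp t))) ∧
    ∀ (M : ℕ) (x : EuclideanSpace ℝ (Fin M)),
      ConvexOn ℝ Set.univ
        (fun w : EuclideanSpace ℝ (Fin M) =>
          -Real.log (Real.log (1 + Real.exp (inner ℝ w x : ℝ)))) := by
  refine ⟨part1, fun M x => ?_⟩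
  have h := part1.comp_affineMap
    ((innerSL ℝ x).toLinearMap.toAffineMap : EuclideanSpace ℝ (Fin M) →ᵃ[ℝ] ℝ)
  simp only [Set.preimage_univ] at h
  refine h.congr (fun w _ => ?_)
  simp [Function.comp, real_inner_comm, mul_comm]
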